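/- Fix x > 1 and define f(α) = (1-α) α^{α/(1-α)} x^{1/(1-α)} for α ∈ (0,1). Then f is strictly decreasing on (0, 1/x) and strictly increasing on (1/x, 1); in particular f attains its minimum on (0,1) at α = 1/x. -/

import Mathlib

open Real Set

theorem stmt9 (x : ℝ) (hx : 1 < x) :
    StrictAntiOn (fun α : ℝ => (1 - α) * α ^ (α / (1 - α)) * x ^ (1 / (1 - α)))
        (Ioo (0 : ℝ) (1 / x)) ∧
      StrictMonoOn (fun α : ℝ => (1 - α) * α ^ (α / (1 - α)) * x ^ (1 / (1 - α)))
        (Ioo (1 / x) 1) ∧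
      ∀ α ∈ Ioo (0 : ℝ) 1,
        (1 - (1 / x)) * (1 / x) ^ ((1 / x) / (1 - 1 / x)) * x ^ (1 / (1 - 1 / x)) ≤
          (1 - α) * α ^ (α / (1 - α)) * x ^ (1 / (1 - α)) := by
  have hx0 : (0 : ℝ) < x := lt_trans one_pos hx
  have hinv0 : (0 : ℝ) < 1 / x := by positivity
  have hinv1 : 1 / x < 1 := by rw [div_lt_one hx0]; exact hx
  set g : ℝ → ℝ := fun α => Real.log (1 - α) + α / (1 - α) * Real.log α
      + 1 / (1 - α) * Real.log x with hgdef
  have hd : ∀ α ∈ Ioo (0 : ℝ) 1,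
      HasDerivAt g ((Real.log α + Real.log x) / (1 - α) ^ 2) α := by
    intro α hα
    obtain ⟨h0, h1⟩ := hα
    have hsub : (0 : ℝ) < 1 - α := by linarith
    have hne : (1 : ℝ) - α ≠ 0 := ne_of_gt hsub
    have hα0 : α ≠ 0 := ne_of_gt h0
    have d1 : HasDerivAt (fun α : ℝ => 1 - α) (-1) α := by
      exact (hasDerivAt_id' α).const_sub 1
    have dlog1 : HasDerivAt (fun α : ℝ => Real.log (1 - α)) (-1 / (1 - α)) α := d1.log hne
    have ddiv : HasDerivAt (fun α : ℝ => α / (1 - α))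
        ((1 * (1 - α) - α * (-1)) / (1 - α) ^ 2) α := (hasDerivAt_id α).div d1 hne
    have dloga : HasDerivAt Real.log α⁻¹ α := Real.hasDerivAt_log hα0
    have d2 : HasDerivAt (fun α : ℝ => α / (1 - α) * Real.log α)
        ((1 * (1 - α) - α * (-1)) / (1 - α) ^ 2 * Real.log α + α / (1 - α) * α⁻¹) α :=
      ddiv.mul dloga
    have dinv : HasDerivAt (fun α : ℝ => 1 / (1 - α))
        ((0 * (1 - α) - 1 * (-1)) / (1 - α) ^ 2) α := (hasDerivAt_const α (1 : ℝ)).div d1 hne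
    have d3 : HasDerivAt (fun α : ℝ => 1 / (1 - α) * Real.log x)
        ((0 * (1 - α) - 1 * (-1)) / (1 - α) ^ 2 * Real.log x) α := dinv.mul_const _
    have := (dlog1.add d2).add d3
    refine this.congr_deriv ?_
    field_simp
    ring
  have hcont : ContinuousOn g (Ioo (0 : ℝ) 1) :=
    fun α hα => (hd α hα).continuousAt.continuousWithinAt
  have hsub1 : Ioc (0 : ℝ) (1 / x) ⊆ Ioo (0 : ℝ) 1 :=
    fun a ha => ⟨ha.1, lt_of_le_of_lt ha.2 hinv1⟩
  have hsub2 : Ico (1 / x) (1 : ℝ) ⊆ Ioo (0 : ℝ) 1 :=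
    fun a ha => ⟨lt_of_lt_of_le hinv0 ha.1, ha.2⟩
  have hfg : ∀ α ∈ Ioo (0 : ℝ) 1,
      (1 - α) * α ^ (α / (1 - α)) * x ^ (1 / (1 - α)) = Real.exp (g α) := by
    intro α hα
    obtain ⟨h0, h1⟩ := hα
    have hsub : (0 : ℝ) < 1 - α := by linarith
    rw [hgdef]
    simp only []
    rw [Real.exp_add, Real.exp_add, Real.exp_log hsub,
      mul_comm (α / (1 - α)), mul_comm (1 / (1 - α)),
      ← Real.rpow_def_of_pos h0, ← Real.rpow_def_of_pos hx0]
  have hanti : StrictAntiOn g (Ioc (0 : ℝ) (1 / x)) := by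
    apply strictAntiOn_of_deriv_neg (convex_Ioc _ _) (hcont.mono hsub1)
    intro α hα
    rw [interior_Ioc] at hα
    have hαI : α ∈ Ioo (0 : ℝ) 1 := ⟨hα.1, lt_trans hα.2 hinv1⟩
    rw [(hd α hαI).deriv]
    apply div_neg_of_neg_of_pos
    · have h1 : Real.log α < Real.log (1 / x) := Real.log_lt_log hα.1 hα.2
      rw [one_div, Real.log_inv] at h1
      linarith
    · have : (0 : ℝ) < 1 - α := by linarith [hαI.2]
      positivity
  have hmono : StrictMonoOn g (Ico (1 / x) (1 : ℝ)) := by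
    apply strictMonoOn_of_deriv_pos (convex_Ico _ _) (hcont.mono hsub2)
    intro α hα
    rw [interior_Ico] at hα
    have hαI : α ∈ Ioo (0 : ℝ) 1 := ⟨lt_trans hinv0 hα.1, hα.2⟩
    rw [(hd α hαI).deriv]
    apply div_pos
    · have h1 : Real.log (1 / x) < Real.log α := Real.log_lt_log hinv0 hα.1
      rw [one_div, Real.log_inv] at h1
      linarith
    · have : (0 : ℝ) < 1 - α := by linarith [hαI.2]
      positivity
  have hmemx : (1 / x) ∈ Ioo (0 : ℝ) 1 := ⟨hinv0, hinv1⟩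
  refine ⟨?_, ?_, ?_⟩
  · intro a ha b hb hab
    simp only
    rw [hfg a (hsub1 ⟨ha.1, ha.2.le⟩), hfg b (hsub1 ⟨hb.1, hb.2.le⟩), Real.exp_lt_exp]
    exact hanti ⟨ha.1, ha.2.le⟩ ⟨hb.1, hb.2.le⟩ hab
  · intro a ha b hb hab
    simp only
    rw [hfg a (hsub2 ⟨ha.1.le, ha.2⟩), hfg b (hsub2 ⟨hb.1.le, hb.2⟩), Real.exp_lt_exp]
    exact hmono ⟨ha.1.le, ha.2⟩ ⟨hb.1.le, hb.2⟩ hab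
  · intro α hα
    rcases lt_trichotomy α (1 / x) with hlt | heq | hgt
    · rw [hfg α hα, hfg (1 / x) hmemx]
      exact (Real.exp_lt_exp.2 (hanti ⟨hα.1, hlt.le⟩ ⟨hinv0, le_refl _⟩ hlt)).le
    · rw [heq]
    · rw [hfg α hα, hfg (1 / x) hmemx]
      exact (Real.exp_lt_exp.2 (hmono ⟨le_refl _, hinv1⟩ ⟨hgt.le, hα.2⟩ hgt)).le
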